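/- Let p be a prime number and let A be a (possibly noncommutative) ring with no zero divisors which is a finitely generated module over its center Z, of rank p² over Z (i.e., the localization K ⊗_Z A at the fraction field K of Z has dimension p² as a K-vector space). Then for every element a ∈ A not belonging to Z, the centralizer B_a = {b ∈ A : ab = ba} of a in A is a commutative ring. -/

import Mathlib

open TensorProduct Module

set_option maxHeartbeats 1000000 in
set_option synthInstance.maxHeartbeats 400000 in
theorem aux_centralizer_comm (p : ℕ) (hp : p.Prime) (K D : Type*) [Field K] [Ring D]
    [IsDomain D] [Algebra K D] [FiniteDimensional K D]
    (hrank : finrank K D = p ^ 2) (a' : D) :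
    (∀ y : D, a' * y = y * a') ∨ (∃ k : K, a' = algebraMap K D k) ∨
      (∀ x ∈ Set.centralizer {a'}, ∀ y ∈ Set.centralizer {a'}, x * y = y * x) := by
  by_cases hcentral : ∀ y : D, a' * y = y * a'
  · exact Or.inl hcentral
  by_cases hscalar : ∃ k : K, a' = algebraMap K D k
  · exact Or.inr (Or.inl hscalar)
  refine Or.inr (Or.inr ?_)
  letI : DivisionRing D := divisionRingOfFiniteDimensional K D
  let C := Subalgebra.centralizer K ({a'} : Set D)
  haveI hfdC : FiniteDimensional K C := inferInstance
  letI : DivisionRing C := divisionRingOfFiniteDimensional K C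
  have hdim1 : finrank K C * finrank C D = p ^ 2 := by
    rw [Module.finrank_mul_finrank, hrank]
  -- C is a proper subalgebra
  obtain ⟨w, hw⟩ := not_forall.mp hcentral
  have hwC : w ∉ C := by
    intro h
    exact hw ((Subalgebra.mem_centralizer_iff K).mp h a' (Set.mem_singleton a'))
  have hCne : Subalgebra.toSubmodule C ≠ ⊤ := by
    intro h
    exact hwC (by rw [← Subalgebra.mem_toSubmodule, h]; trivial)
  have hlt : finrank K C < p ^ 2 := by
    rw [← hrank]
    exact Submodule.finrank_lt hCne
  have hdvd : finrank K C ∣ p ^ 2 := ⟨finrank C D, hdim1.symm⟩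
  obtain ⟨i, hi2, hni⟩ := (Nat.dvd_prime_pow hp).mp hdvd
  have hi1 : i ≤ 1 := by
    by_contra h
    have : i = 2 := by omega
    rw [hni, this] at hlt
    exact lt_irrefl _ hlt
  -- the center E of C
  let E := Subalgebra.center K C
  haveI hfdE : FiniteDimensional K E := inferInstance
  letI : Field E := fieldOfFiniteDimensional K E
  have hdim2 : finrank K E * finrank E C = finrank K C :=
    Module.finrank_mul_finrank K E C
  have ha'C : a' ∈ C := (Subalgebra.mem_centralizer_iff K).mpr (by simp)
  have ha''E : (⟨a', ha'C⟩ : C) ∈ E := by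
    rw [Subalgebra.mem_center_iff]
    intro g
    exact Subtype.ext ((Subalgebra.mem_centralizer_iff K).mp g.2 a' (Set.mem_singleton a')).symm
  have h2le : 2 ≤ finrank K E := by
    by_contra hle
    push_neg at hle
    obtain ⟨v, hv⟩ := finrank_le_one_iff.mp (Nat.lt_succ_iff.mp hle)
    obtain ⟨c1, hc1⟩ := hv 1
    obtain ⟨c2, hc2⟩ := hv ⟨⟨a', ha'C⟩, ha''E⟩
    have hc1ne : c1 ≠ 0 := by
      rintro rfl
      rw [zero_smul] at hc1
      exact one_ne_zero hc1.symm
    have hE2 : (⟨⟨a', ha'C⟩, ha''E⟩ : E) = (c2 * c1⁻¹) • (1 : E) := by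
      rw [← hc1, smul_smul, mul_assoc, inv_mul_cancel₀ hc1ne, mul_one, hc2]
    apply hscalar
    refine ⟨c2 * c1⁻¹, ?_⟩
    have := congrArg (fun x : E => ((x : C) : D)) hE2
    simpa [Algebra.algebraMap_eq_smul_one] using this
  have hEdvd : finrank K E ∣ p ^ i := by
    rw [← hni]; exact ⟨finrank E C, hdim2.symm⟩
  have hEdvdp : finrank K E ∣ p := by
    interval_cases i
    · rw [pow_zero] at hEdvd
      have := Nat.dvd_one.mp hEdvd
      omega
    · rwa [pow_one] at hEdvd
  have hEp : finrank K E = p := by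
    rcases (Nat.Prime.eq_one_or_self_of_dvd hp _ hEdvdp) with h | h
    · omega
    · exact h
  have hCp : finrank K C = p := by
    interval_cases i
    · rw [pow_zero] at hEdvd
      have := Nat.dvd_one.mp hEdvd
      omega
    · rw [hni, pow_one]
  have hEtop : Subalgebra.toSubmodule E = ⊤ := by
    apply Submodule.eq_top_of_finrank_eq
    rw [hCp, ← hEp]
    rfl
  intro x hx y hy
  have hxC : x ∈ C := (Subalgebra.mem_centralizer_iff K).mpr hx
  have hyC : y ∈ C := (Subalgebra.mem_centralizer_iff K).mpr hy
  have hxE : (⟨x, hxC⟩ : C) ∈ E := by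
    rw [← Subalgebra.mem_toSubmodule, hEtop]; trivial
  have hcomm := Subalgebra.mem_center_iff.mp hxE ⟨y, hyC⟩
  have := congrArg Subtype.val hcomm
  simpa using this.symm


set_option maxHeartbeats 4000000 in
set_option synthInstance.maxHeartbeats 1000000 in
/-- Let `p` be a prime and `A` a domain which is a finitely generated module over its
center `Z`, of rank `p ^ 2` over `Z` (i.e. `K ⊗[Z] A` has dimension `p ^ 2` over the
fraction field `K` of `Z`).  Then the centralizer of every element `a ∉ Z` is commutative. -/
theorem centralizer_commutative_of_rank_p_sq
    (p : ℕ) (hp : p.Prime) (A : Type*) [Ring A] [IsDomain A]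
    [Module.Finite (Subring.center A) A]
    (hrank : Module.finrank (FractionRing (Subring.center A))
      (TensorProduct (Subring.center A) (FractionRing (Subring.center A)) A) = p ^ 2)
    (a : A) (ha : a ∉ Subring.center A) :
    ∀ b ∈ Subring.centralizer ({a} : Set A), ∀ c ∈ Subring.centralizer ({a} : Set A),
      b * c = c * b := by
  intro b hb c hc
  let Z := Subring.center A
  let K := FractionRing Z
  let D := TensorProduct Z K A
  let S := nonZeroDivisors Z
  let f : A →ₗ[Z] D := TensorProduct.mk Z K A 1
  have h1 : IsLocalizedModule S f :=
    (isLocalizedModule_iff_isBaseChange S K _).mpr (TensorProduct.isBaseChange Z A K)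
  have hz : ∀ (s : S) (x : A), (s : Z) • x = ((s : Z) : A) * x := fun s x => rfl
  -- f is injective
  have hinj : Function.Injective f := by
    intro x y hxy
    have h0 : f (x - y) = 0 := by rw [map_sub, hxy, sub_self]
    obtain ⟨s, hs⟩ := (IsLocalizedModule.eq_zero_iff S f).mp h0
    have hs2 : ((s : Z) : A) * (x - y) = 0 := by rw [← hz]; exact hs
    have hsne : ((s : Z) : A) ≠ 0 := by
      intro h
      exact nonZeroDivisors.coe_ne_zero s (Subtype.ext (by exact_mod_cast h))
    rcases mul_eq_zero.mp hs2 with h | h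
    · exact absurd h hsne
    · exact sub_eq_zero.mp h
  -- f is multiplicative and unital
  have hmul : ∀ x y : A, f (x * y) = f x * f y := by
    intro x y
    show (1 : K) ⊗ₜ[Z] (x * y) = ((1 : K) ⊗ₜ[Z] x) * ((1 : K) ⊗ₜ[Z] y)
    rw [Algebra.TensorProduct.tmul_mul_tmul, one_mul]
  have hone : f 1 = 1 := rfl
  -- scalars from S kill nothing in D
  have hsz : ∀ (s : S) (x : D), (s : Z) • x = 0 → x = 0 := by
    intro s x hx
    have h2 : algebraMap Z K (s : Z) • x = 0 := by rwa [algebraMap_smul]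
    rcases smul_eq_zero.mp h2 with h | h
    · exact absurd h (IsLocalization.map_units K s).ne_zero
    · exact h
  -- D is a domain
  have hnontriv : Nontrivial D := by
    refine ⟨1, 0, fun h => ?_⟩
    have : (1 : A) = 0 := hinj (by rw [hone, map_zero, h])
    exact one_ne_zero this
  have hnzd : NoZeroDivisors D := by
    constructor
    intro x y hxy
    obtain ⟨⟨ax, sx⟩, hsx⟩ := IsLocalizedModule.surj S f x
    obtain ⟨⟨ay, sy⟩, hsy⟩ := IsLocalizedModule.surj S f y
    simp only at hsx hsy
    by_contra hcon
    push_neg at hcon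
    have hxne : x ≠ 0 := hcon.1
    have hyne : y ≠ 0 := hcon.2
    have haxne : ax ≠ 0 := by
      intro h; rw [h, map_zero] at hsx; exact hxne (hsz sx x hsx)
    have hayne : ay ≠ 0 := by
      intro h; rw [h, map_zero] at hsy; exact hyne (hsz sy y hsy)
    have key : f (ax * ay) = 0 := by
      rw [hmul, ← hsx, ← hsy, smul_mul_assoc, mul_smul_comm, hxy, smul_zero, smul_zero]
    have : ax * ay = 0 := hinj (by rw [key, map_zero])
    rcases mul_eq_zero.mp this with h | h
    · exact haxne h
    · exact hayne h
  letI hdom : IsDomain D := NoZeroDivisors.to_isDomain D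
  rcases aux_centralizer_comm p hp K D hrank (f a) with hcent | hscal | hcomm
  · -- f a central in D : contradiction with a ∉ Z
    exfalso
    apply ha
    rw [Subring.mem_center_iff]
    intro g
    have h2 : f (a * g) = f (g * a) := by rw [hmul, hmul, hcent (f g)]
    exact (hinj h2).symm
  · -- f a is a scalar : contradiction with a ∉ Z
    exfalso
    obtain ⟨k, hk⟩ := hscal
    obtain ⟨s, cc, hcc⟩ := IsLocalization.exists_integer_multiple S k
    -- f ((s:Z) • a) = f ((cc:Z) • 1)
    have key : f ((s : Z) • a) = f ((cc : Z) • (1 : A)) := by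
      rw [map_smul, map_smul, hk, hone]
      rw [Algebra.algebraMap_eq_smul_one, ← smul_assoc]
      rw [show (s : Z) • k = algebraMap Z K cc from hcc.symm]
      rw [algebraMap_smul]
    have key2 : ((s : Z) : A) * a = ((cc : Z) : A) := by
      have := hinj key
      rw [hz] at this
      rw [this, show (cc • (1:A)) = ((cc : Z) : A) * 1 from rfl, mul_one]
    have hsA : ((s : Z) : A) ∈ Subring.center A := (s : Z).2
    have hcA : ((cc : Z) : A) ∈ Subring.center A := (cc : Z).2
    have hsne : ((s : Z) : A) ≠ 0 := by
      intro h
      exact nonZeroDivisors.coe_ne_zero s (Subtype.ext (by exact_mod_cast h))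
    apply ha
    rw [Subring.mem_center_iff]
    intro g
    apply mul_left_cancel₀ hsne
    calc ((s : Z) : A) * (g * a) = g * (((s : Z) : A) * a) := by
          rw [← mul_assoc, ← Subring.mem_center_iff.mp hsA g, mul_assoc]
      _ = g * ((cc : Z) : A) := by rw [key2]
      _ = ((cc : Z) : A) * g := Subring.mem_center_iff.mp hcA g
      _ = (((s : Z) : A) * a) * g := by rw [key2]
      _ = ((s : Z) : A) * (a * g) := by rw [mul_assoc]
  · -- the centralizer is commutative
    have hab : a * b = b * a := Subring.mem_centralizer_iff.mp hb a (Set.mem_singleton a)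
    have hac : a * c = c * a := Subring.mem_centralizer_iff.mp hc a (Set.mem_singleton a)
    have hbm : f b ∈ Set.centralizer {f a} := by
      intro m hm
      rw [Set.mem_singleton_iff] at hm
      subst hm
      rw [← hmul, ← hmul, hab]
    have hcm : f c ∈ Set.centralizer {f a} := by
      intro m hm
      rw [Set.mem_singleton_iff] at hm
      subst hm
      rw [← hmul, ← hmul, hac]
    have := hcomm (f b) hbm (f c) hcm
    have h2 : f (b * c) = f (c * b) := by rw [hmul, hmul, this, ← hmul]
    exact hinj h2
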